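/- Let μ, ν be finite monotone measures and suppose the pair (μ, ν) has the decomposition property with respect to a decreasing family {A_α}_{α ∈ ℚ≥0} with A_0 = U. If lim_{α→∞} max(μ(A_α), ν(A_α)) = 0, then lim_{α→∞} α·ν(A_α) = 0. -/

import Mathlib

open MeasureTheory Filter Set
open scoped NNReal ENNReal NNRat

variable {U : Type*}

/-- The Choquet integral of `f` w.r.t. the set function `ν` on the set `A`:
`∫₀^∞ ν({f ≥ t} ∩ A) dt`. -/
noncomputable def Choquet [MeasurableSpace U] (ν : Set U → ENNReal) (f : U → ENNReal)
    (A : Set U) : ENNReal :=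
  ∫⁻ t in Set.Ioi (0 : ℝ), ν ({x | ENNReal.ofReal t ≤ f x} ∩ A)

/-- A monotone measure: vanishes at `∅` and is monotone on measurable sets. -/
def IsMonotoneMeasure [MeasurableSpace U] (ν : Set U → ENNReal) : Prop :=
  ν ∅ = 0 ∧ ∀ A B : Set U, MeasurableSet A → MeasurableSet B → A ⊆ B → ν A ≤ ν B

/-- The decomposition inequalities for the ordered pair `(μ, ν)` w.r.t. a family
`A : NNRat → Set U`, stated additively (no truncated subtraction):
`α(ν(S∩A_α) − ν(S∩A_β)) ≤ μ(S∩A_α) − μ(S∩A_β) ≤ β(ν(S∩A_α) − ν(S∩A_β))`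
for all measurable `S` of finite `μ`- and `ν`-measure and rationals `α < β`. -/
def DecompIneq [MeasurableSpace U] (μ ν : Set U → ENNReal) (A : NNRat → Set U) : Prop :=
  ∀ S : Set U, MeasurableSet S → μ S ≠ ⊤ → ν S ≠ ⊤ →
    ∀ α β : NNRat, α < β →
      (((α : ℝ≥0) : ENNReal) * ν (S ∩ A α) + μ (S ∩ A β)
          ≤ μ (S ∩ A α) + ((α : ℝ≥0) : ENNReal) * ν (S ∩ A β)) ∧
      (μ (S ∩ A α) + ((β : ℝ≥0) : ENNReal) * ν (S ∩ A β)
          ≤ ((β : ℝ≥0) : ENNReal) * ν (S ∩ A α) + μ (S ∩ A β))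

/-- The decomposition property: a decreasing family of measurable sets with `A 0 = univ`
satisfying the decomposition inequalities. -/
def DecompProp [MeasurableSpace U] (μ ν : Set U → ENNReal) (A : NNRat → Set U) : Prop :=
  (∀ α, MeasurableSet (A α)) ∧ A 0 = Set.univ ∧ Antitone A ∧ DecompIneq μ ν A

/-- Comonotonicity for `ℝ≥0∞`-valued functions. -/
def Comonotone (f g : U → ENNReal) : Prop :=
  ∀ s t : U, (f s ≤ f t ∧ g s ≤ g t) ∨ (f t ≤ f s ∧ g t ≤ g s)

theorem alpha_mul_nu_tendsto_zero [MeasurableSpace U] (μ ν : Set U → ENNReal)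
    (hμ : IsMonotoneMeasure μ) (hν : IsMonotoneMeasure ν)
    (hμfin : μ Set.univ ≠ ⊤) (hνfin : ν Set.univ ≠ ⊤)
    (A : NNRat → Set U) (hd : DecompProp μ ν A)
    (ht : Tendsto (fun α : NNRat => max (μ (A α)) (ν (A α))) atTop (nhds 0)) :
    Tendsto (fun α : NNRat => ((α : ℝ≥0) : ENNReal) * ν (A α)) atTop (nhds 0) := by
  have hμt : Tendsto (fun α : NNRat => μ (A α)) atTop (nhds 0) :=
    tendsto_of_tendsto_of_tendsto_of_le_of_le tendsto_const_nhds ht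
      (fun α => zero_le) (fun α => le_max_left _ _)
  have hνt : Tendsto (fun α : NNRat => ν (A α)) atTop (nhds 0) :=
    tendsto_of_tendsto_of_tendsto_of_le_of_le tendsto_const_nhds ht
      (fun α => zero_le) (fun α => le_max_right _ _)
  have key : ∀ α : NNRat, ((α : ℝ≥0) : ENNReal) * ν (A α) ≤ μ (A α) := by
    intro α
    have hq : Tendsto (fun β : NNRat => μ (A α) + ((α : ℝ≥0) : ENNReal) * ν (A β)) atTop
        (nhds (μ (A α) + ((α : ℝ≥0) : ENNReal) * 0)) :=
      Tendsto.const_add _ (ENNReal.Tendsto.const_mul hνt (Or.inr ENNReal.coe_ne_top))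
    rw [mul_zero, add_zero] at hq
    refine ge_of_tendsto hq ?_
    filter_upwards [eventually_gt_atTop α] with β hβ
    have h := (hd.2.2.2 Set.univ MeasurableSet.univ hμfin hνfin α β hβ).1
    simp only [Set.univ_inter] at h
    exact le_trans le_self_add h
  exact tendsto_of_tendsto_of_tendsto_of_le_of_le tendsto_const_nhds hμt
    (fun α => zero_le) key
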